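/- Let w be a dynamic graph over IS_n with w ∈ Solo(P)^ω that is not Fair for P. Then there exist a nonempty Q ⊊ P and a suffix of w lying in Solo(Q)^ω. -/
import Mathlib


/-- `Solo P G` : in the instant graph `G`, processes of `P` receive no messages
from outside `P`. -/
def Solo {n : ℕ} (P : Set (Fin (n + 1))) (G : Fin (n + 1) → Fin (n + 1) → Prop) : Prop :=
  ∀ p q, G p q → q ∈ P → p ∈ P

/-- A graph of `IS_n`: self-loops, Immediacy and Containment. -/
def IsIS {n : ℕ} (G : Fin (n + 1) → Fin (n + 1) → Prop) : Prop :=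
  (∀ a, G a a) ∧ (∀ a b c, G a b → G b c → G a c) ∧ (∀ a b, a ≠ b → G a b ∨ G b a)

/-- There is a journey from `p` to `q` in the dynamic graph `w` starting at round `r`. -/
def Journey {n : ℕ} (w : ℕ → Fin (n + 1) → Fin (n + 1) → Prop) (r : ℕ)
    (p q : Fin (n + 1)) : Prop :=
  ∃ (t : ℕ) (f : Fin (t + 1) → Fin (n + 1)) (g : Fin t → ℕ),
    f 0 = p ∧ f (Fin.last t) = q ∧ StrictMono g ∧ (∀ i, r ≤ g i) ∧
    ∀ i : Fin t, w (g i) (f i.castSucc) (f i.succ)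

/-- `w` is Fair for `P`. -/
def Fair {n : ℕ} (P : Set (Fin (n + 1))) (w : ℕ → Fin (n + 1) → Fin (n + 1) → Prop) : Prop :=
  (∀ r, Solo P (w r)) ∧ ∀ p ∈ P, ∀ q ∈ P, ∀ r, Journey w r p q

lemma journey_refl {n : ℕ} (w : ℕ → Fin (n + 1) → Fin (n + 1) → Prop) (r : ℕ)
    (q : Fin (n + 1)) : Journey w r q q :=
  ⟨0, fun _ => q, fun i => i.elim0, rfl, rfl, fun i => i.elim0, fun i => i.elim0,
    fun i => i.elim0⟩

lemma journey_mono {n : ℕ} {w : ℕ → Fin (n + 1) → Fin (n + 1) → Prop} {r r' : ℕ}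
    (h : r ≤ r') {p q : Fin (n + 1)} (hJ : Journey w r' p q) : Journey w r p q := by
  obtain ⟨t, f, g, h0, h1, h2, h3, h4⟩ := hJ
  exact ⟨t, f, g, h0, h1, h2, fun i => le_trans h (h3 i), h4⟩

lemma journey_cons {n : ℕ} {w : ℕ → Fin (n + 1) → Fin (n + 1) → Prop} {r : ℕ}
    {a b q : Fin (n + 1)} (hab : w r a b) (hJ : Journey w (r + 1) b q) :
    Journey w r a q := by
  obtain ⟨t, f, g, h0, h1, h2, h3, h4⟩ := hJ
  refine ⟨t + 1, Fin.cons a f, Fin.cons r g, rfl, ?_, ?_, ?_, ?_⟩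
  · rw [show Fin.last (t + 1) = (Fin.last t).succ from rfl, Fin.cons_succ]; exact h1
  · intro i j hij
    cases j using Fin.cases with
    | zero => exact absurd hij (Fin.not_lt_zero _)
    | succ j' =>
      cases i using Fin.cases with
      | zero =>
        simp only [Fin.cons_zero, Fin.cons_succ]
        exact lt_of_lt_of_le (Nat.lt_succ_self r) (h3 j')
      | succ i' =>
        simp only [Fin.cons_succ]
        exact h2 (Fin.succ_lt_succ_iff.mp hij)
  · intro i
    cases i using Fin.cases with
    | zero => simp
    | succ i' =>
      simp only [Fin.cons_succ]
      exact le_of_lt (lt_of_lt_of_le (Nat.lt_succ_self r) (h3 i'))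
  · intro i
    cases i using Fin.cases with
    | zero =>
      simp only [Fin.castSucc_zero, Fin.cons_zero, Fin.cons_succ, h0]
      exact hab
    | succ i' =>
      have hc : i'.succ.castSucc = i'.castSucc.succ := rfl
      simp only [hc, Fin.cons_succ]
      exact h4 i'

theorem not_fair_solo_suffix {n : ℕ} (w : ℕ → Fin (n + 1) → Fin (n + 1) → Prop)
    (hIS : ∀ r, IsIS (w r)) (P : Set (Fin (n + 1)))
    (hw : ∀ r, Solo P (w r)) (hnfair : ¬ Fair P w) :
    ∃ Q : Set (Fin (n + 1)), Q.Nonempty ∧ Q ⊂ P ∧ ∃ s, ∀ r ≥ s, Solo Q (w r) := by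
  classical
  have hnJ : ∃ p ∈ P, ∃ q ∈ P, ∃ s, ¬ Journey w s p q := by
    by_contra h
    push_neg at h
    exact hnfair ⟨hw, fun p hp q hq r => h p hp q hq r⟩
  obtain ⟨p, hp, q, hq, s, hpq⟩ := hnJ
  set A : ℕ → Set (Fin (n + 1)) := fun r => {x | Journey w r x q} with hA
  have hanti : ∀ r r', r ≤ r' → A r' ⊆ A r := fun r r' h x hx => journey_mono h hx
  -- stabilization of the decreasing sequence of sets
  have hstab : ∃ s' ≥ s, ∀ r ≥ s', A r = A s' := by
    let S : Set ℕ := {k | ∃ r ≥ s, (A r).ncard = k}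
    have hSne : S.Nonempty := ⟨(A s).ncard, s, le_refl s, rfl⟩
    obtain ⟨s', hs', hcard⟩ : ∃ r ≥ s, (A r).ncard = sInf S := Nat.sInf_mem hSne
    refine ⟨s', hs', fun r hr => ?_⟩
    have hsub : A r ⊆ A s' := hanti s' r hr
    have hle : sInf S ≤ (A r).ncard := Nat.sInf_le ⟨r, le_trans hs' hr, rfl⟩
    exact Set.eq_of_subset_of_ncard_le hsub (hcard ▸ hle)
  obtain ⟨s', hs's, hst⟩ := hstab
  refine ⟨A s' ∩ P, ⟨q, journey_refl w s' q, hq⟩, ?_, s', ?_⟩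
  · constructor
    · exact Set.inter_subset_right
    · intro hPs
      exact hpq (hanti s s' hs's (hPs hp).1)
  · intro r hr a b hab hbQ
    have haP : a ∈ P := hw r a b hab hbQ.2
    have hbJ : Journey w (r + 1) b q := by
      have : b ∈ A (r + 1) := by
        rw [hst (r + 1) (le_trans hr (Nat.le_succ r))]
        exact hbQ.1
      exact this
    have haA : a ∈ A r := journey_cons hab hbJ
    rw [hst r hr] at haA
    exact ⟨haA, haP⟩
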